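/- If R and S are commutative rings with unit, then the ring of polyfunctions G(R ⊕ S) is isomorphic to G(R) ⊕ G(S). In particular, if gcd(m,n) = 1 then G(ℤ/mnℤ) ≅ G(ℤ/mℤ) ⊕ G(ℤ/nℤ). -/

import Mathlib

/-- The ring of polyfunctions over a commutative ring `R`: the subring of
`R → R` consisting of functions represented by a polynomial. -/
noncomputable def polyfunRing (R : Type) [CommRing R] : Subring (R → R) :=
  (Pi.ringHom (fun x : R => Polynomial.evalRingHom x)).range

section Aux
variable {R S : Type} [CommRing R] [CommRing S]

lemma mem_iff' {f : R → R} : f ∈ polyfunRing R ↔ ∃ p : Polynomial R, ∀ x, p.eval x = f x := by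
  constructor
  · rintro ⟨p, hp⟩; exact ⟨p, fun x => congrFun hp x⟩
  · rintro ⟨p, hp⟩; exact ⟨p, funext hp⟩

lemma eval_fst' (P : Polynomial (R × S)) (r : R) (s : S) :
    (P.eval (r, s)).1 = (P.map (RingHom.fst R S)).eval r := by
  rw [Polynomial.eval_map]
  exact (Polynomial.eval₂_hom (RingHom.fst R S) (r, s)).symm

lemma eval_snd' (P : Polynomial (R × S)) (r : R) (s : S) :
    (P.eval (r, s)).2 = (P.map (RingHom.snd R S)).eval s := by
  rw [Polynomial.eval_map]
  exact (Polynomial.eval₂_hom (RingHom.snd R S) (r, s)).symm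

noncomputable def combine (p : Polynomial R) (q : Polynomial S) : Polynomial (R × S) :=
  p.sum (fun n a => Polynomial.C (a, (0:S)) * Polynomial.X ^ n) +
  q.sum (fun n b => Polynomial.C ((0:R), b) * Polynomial.X ^ n)

lemma combine_eval (p : Polynomial R) (q : Polynomial S) (r : R) (s : S) :
    (combine p q).eval (r, s) = (p.eval r, q.eval s) := by
  have h1 : (p.sum (fun n a => Polynomial.C (a, (0:S)) * Polynomial.X ^ n)).eval (r, s)
      = (p.eval r, 0) := by
    rw [Polynomial.sum_def, Polynomial.eval_finset_sum]
    simp only [Polynomial.eval_mul, Polynomial.eval_C, Polynomial.eval_pow, Polynomial.eval_X]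
    ext
    · rw [Prod.fst_sum]
      simp [Polynomial.eval_eq_sum, Polynomial.sum_def, Prod.pow_fst]
    · rw [Prod.snd_sum]
      simp [Prod.pow_snd]
  have h2 : (q.sum (fun n b => Polynomial.C ((0:R), b) * Polynomial.X ^ n)).eval (r, s)
      = (0, q.eval s) := by
    rw [Polynomial.sum_def, Polynomial.eval_finset_sum]
    simp only [Polynomial.eval_mul, Polynomial.eval_C, Polynomial.eval_pow, Polynomial.eval_X]
    ext
    · rw [Prod.fst_sum]; simp [Prod.pow_fst]
    · rw [Prod.snd_sum]
      simp [Polynomial.eval_eq_sum, Polynomial.sum_def, Prod.pow_snd]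
  rw [combine, Polynomial.eval_add, h1, h2]
  ext <;> simp

/-- first component map -/
def Amap (R S : Type) [CommRing R] [CommRing S] : ((R × S) → (R × S)) →+* (R → R) :=
  Pi.ringHom (fun r => (RingHom.fst R S).comp (Pi.evalRingHom (fun _ => R × S) (r, 0)))

def Bmap (R S : Type) [CommRing R] [CommRing S] : ((R × S) → (R × S)) →+* (S → S) :=
  Pi.ringHom (fun s => (RingHom.snd R S).comp (Pi.evalRingHom (fun _ => R × S) (0, s)))

lemma Amap_mem (f : polyfunRing (R × S)) : Amap R S f.1 ∈ polyfunRing R := by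
  obtain ⟨p, hp⟩ := mem_iff'.mp f.2
  refine mem_iff'.mpr ⟨p.map (RingHom.fst R S), fun r => ?_⟩
  show _ = (f.1 (r, 0)).1
  rw [← hp (r, 0), eval_fst']

lemma Bmap_mem (f : polyfunRing (R × S)) : Bmap R S f.1 ∈ polyfunRing S := by
  obtain ⟨p, hp⟩ := mem_iff'.mp f.2
  refine mem_iff'.mpr ⟨p.map (RingHom.snd R S), fun s => ?_⟩
  show _ = (f.1 (0, s)).2
  rw [← hp (0, s), eval_snd']

noncomputable def phi (R S : Type) [CommRing R] [CommRing S] :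
    polyfunRing (R × S) →+* polyfunRing R × polyfunRing S :=
  RingHom.prod
    (((Amap R S).comp (polyfunRing (R × S)).subtype).codRestrict (polyfunRing R)
      (fun f => Amap_mem f))
    (((Bmap R S).comp (polyfunRing (R × S)).subtype).codRestrict (polyfunRing S)
      (fun f => Bmap_mem f))

lemma phi_bijective : Function.Bijective (phi R S) := by
  constructor
  · intro f g h
    obtain ⟨p, hp⟩ := mem_iff'.mp f.2
    obtain ⟨q, hq⟩ := mem_iff'.mp g.2
    have h1 : ∀ r, (f.1 (r, 0)).1 = (g.1 (r, 0)).1 := fun r =>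
      congrFun (congrArg Subtype.val (congrArg Prod.fst h)) r
    have h2 : ∀ s, (f.1 (0, s)).2 = (g.1 (0, s)).2 := fun s =>
      congrFun (congrArg Subtype.val (congrArg Prod.snd h)) s
    ext ⟨r, s⟩
    · rw [← hp (r, s), ← hq (r, s), eval_fst', eval_fst', ← eval_fst' p r 0,
        ← eval_fst' q r 0, hp, hq]
      exact h1 r
    · rw [← hp (r, s), ← hq (r, s), eval_snd', eval_snd', ← eval_snd' p 0 s,
        ← eval_snd' q 0 s, hp, hq]
      exact h2 s
  · rintro ⟨⟨g, hg⟩, ⟨h, hh⟩⟩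
    obtain ⟨p, hp⟩ := mem_iff'.mp hg
    obtain ⟨q, hq⟩ := mem_iff'.mp hh
    refine ⟨⟨fun x => (g x.1, h x.2), mem_iff'.mpr ⟨combine p q, fun x => ?_⟩⟩, ?_⟩
    · rw [show x = (x.1, x.2) from rfl, combine_eval, hp, hq]
    · ext z
      · show (g z, h 0).1 = g z; rfl
      · show (g 0, h z).2 = h z; rfl

/-- transport along a ring equiv -/
noncomputable def polyfunCongr {R R' : Type} [CommRing R] [CommRing R'] (e : R ≃+* R') :
    polyfunRing R ≃+* polyfunRing R' where
  toFun f := ⟨fun y => e (f.1 (e.symm y)), by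
    obtain ⟨p, hp⟩ := mem_iff'.mp f.2
    refine mem_iff'.mpr ⟨p.map (e : R →+* R'), fun y => ?_⟩
    rw [Polynomial.eval_map]
    have h2 := Polynomial.eval₂_hom ((e : R →+* R')) (e.symm y) (p := p)
    simpa [hp] using h2⟩
  invFun f := ⟨fun x => e.symm (f.1 (e x)), by
    obtain ⟨p, hp⟩ := mem_iff'.mp f.2
    refine mem_iff'.mpr ⟨p.map (e.symm : R' →+* R), fun x => ?_⟩
    rw [Polynomial.eval_map]
    have h2 := Polynomial.eval₂_hom ((e.symm : R' →+* R)) (e x) (p := p)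
    simpa [hp] using h2⟩
  left_inv f := by ext x; simp
  right_inv f := by ext x; simp
  map_mul' f g := by ext x; simp
  map_add' f g := by ext x; simp

end Aux

/-- `G(R ⊕ S) ≅ G(R) ⊕ G(S)`; in particular `G(ℤ/mnℤ) ≅ G(ℤ/mℤ) ⊕ G(ℤ/nℤ)`
when `gcd m n = 1`. -/
theorem polyfunRing_prod :
    (∀ (R S : Type) [CommRing R] [CommRing S],
      Nonempty (polyfunRing (R × S) ≃+* polyfunRing R × polyfunRing S)) ∧
    (∀ m n : ℕ, Nat.Coprime m n →
      Nonempty (polyfunRing (ZMod (m * n)) ≃+*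
        polyfunRing (ZMod m) × polyfunRing (ZMod n))) := by
  have main : ∀ (R S : Type) [CommRing R] [CommRing S],
      Nonempty (polyfunRing (R × S) ≃+* polyfunRing R × polyfunRing S) :=
    fun R S _ _ => ⟨RingEquiv.ofBijective (phi R S) phi_bijective⟩
  refine ⟨main, fun m n h => ?_⟩
  obtain ⟨e⟩ := main (ZMod m) (ZMod n)
  exact ⟨(polyfunCongr (ZMod.chineseRemainder h)).trans e⟩
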